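/- Let H be a lattice with a unimodular bilinear form, and H₁ ⊂ H a sublattice with H₁ ⊕ H₁⊥ of finite index in H. If an endomorphism of H acts as λ times the orthogonal projection onto H₁ (λ ∈ ℚ) and maps H to H, and H₁ is primitive in H, then λ ∈ ℤ. -/

import Mathlib

/-- If an endomorphism of a unimodular lattice `H` acts as `λ` times the orthogonal
projection onto a nonzero primitive sublattice `H₁` (with `λ ∈ ℚ`, and `H₁ ⊕ H₁⊥` of
finite index in `H`), then `λ ∈ ℤ`. -/
theorem stmt_7 (H : Type*) [AddCommGroup H] [Module ℤ H]
    [Module.Free ℤ H] [Module.Finite ℤ H]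
    (ω : LinearMap.BilinForm ℤ H) (hω : Function.Bijective ω)
    (H₁ : Submodule ℤ H) (hne : H₁ ≠ ⊥)
    (hprim : ∀ (n : ℤ) (x : H), n ≠ 0 → n • x ∈ H₁ → x ∈ H₁)
    (lam : ℚ) (φ : H →ₗ[ℤ] H)
    (hφ1 : ∀ x ∈ H₁, (lam.den : ℤ) • φ x = lam.num • x)
    (hφ2 : ∀ y : H, (∀ x ∈ H₁, ω y x = 0) → φ y = 0)
    (hfin : ∀ z : H, ∃ k : ℤ, k ≠ 0 ∧ k • z ∈ H₁ ⊔ ω.orthogonal H₁) :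
    ∃ m : ℤ, lam = m := by
  by_contra hcon
  have hden1 : lam.den ≠ 1 := by
    intro h1
    exact hcon ⟨lam.num, by rw [← Rat.num_div_den lam, h1]; simp⟩
  have hD2 : (2 : ℤ) ≤ (lam.den : ℤ) := by
    have : 1 < lam.den := lt_of_le_of_ne lam.pos (Ne.symm hden1)
    exact_mod_cast this
  set D : ℤ := (lam.den : ℤ) with hD
  have hD0 : D ≠ 0 := by omega
  have hcop : IsCoprime D lam.num := by
    rw [Int.isCoprime_iff_gcd_eq_one, Int.gcd_comm]
    exact lam.reduced
  -- basis
  set ι := Module.Free.ChooseBasisIndex ℤ H with hι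
  set b : Module.Basis ι ℤ H := Module.Free.chooseBasis ℤ H with hb
  -- key step: elements of H₁ are divisible by D inside H₁
  have key : ∀ x ∈ H₁, ∃ x' ∈ H₁, D • x' = x := by
    intro x hx
    have hxy : D • φ x = lam.num • x := hφ1 x hx
    simp only [← Int.cast_smul_eq_zsmul ℤ, Int.cast_id] at hxy
    have hcoord : ∀ i, D * b.repr (φ x) i = lam.num * b.repr x i := by
      intro i
      have h := congrArg (fun z => b.repr z i) hxy
      simpa using h
    have hdvd : ∀ i, D ∣ b.repr x i := fun i =>
      hcop.dvd_of_dvd_mul_left ⟨b.repr (φ x) i, (hcoord i).symm⟩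
    have hsm : D • b.repr.symm ((b.repr x).mapRange (· / D) (by simp)) = x := by
      apply b.repr.injective
      simp only [← Int.cast_smul_eq_zsmul ℤ, Int.cast_id]
      simp only [map_smul, LinearEquiv.apply_symm_apply]
      ext i
      simp only [Finsupp.smul_apply, Finsupp.mapRange_apply, smul_eq_mul]
      exact Int.mul_ediv_cancel' (hdvd i)
    exact ⟨_, hprim D _ hD0 (by rw [hsm]; exact hx), hsm⟩
  -- pick a nonzero element of H₁
  obtain ⟨x, hxH, hx0⟩ := Submodule.exists_mem_ne_zero_of_ne_bot hne
  -- descent: x divisible by D^k for all k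
  have descent : ∀ k : ℕ, ∃ x' ∈ H₁, D ^ k • x' = x := by
    intro k
    induction k with
    | zero => exact ⟨x, hxH, by simp⟩
    | succ n ih =>
      obtain ⟨y, hyH, hy⟩ := ih
      obtain ⟨y', hy'H, hy'⟩ := key y hyH
      exact ⟨y', hy'H, by rw [pow_succ, mul_zsmul, hy', hy]⟩
  -- choose coordinate where x is nonzero
  have hr : b.repr x ≠ 0 := fun h => hx0 (by simpa using b.repr.injective (by simpa using h))
  obtain ⟨i, hi⟩ := Finsupp.ne_iff.mp hr
  simp only [Finsupp.coe_zero, Pi.zero_apply] at hi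
  set c : ℤ := b.repr x i with hc
  obtain ⟨y, _, hy⟩ := descent c.natAbs
  have hdvd : D ^ c.natAbs ∣ c := by
    refine ⟨b.repr y i, ?_⟩
    have h := congrArg (fun z => b.repr z i) hy
    simp only [← Int.cast_smul_eq_zsmul ℤ, Int.cast_id, map_smul, Finsupp.smul_apply,
      smul_eq_mul] at h
    exact h.symm
  have h1 : D ^ c.natAbs ≤ |c| := Int.le_of_dvd (abs_pos.mpr hi) ((dvd_abs _ _).mpr hdvd)
  have h2 : (2 : ℤ) ^ c.natAbs ≤ D ^ c.natAbs := pow_le_pow_left₀ (by norm_num) hD2 _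
  have h3 : (c.natAbs : ℤ) < 2 ^ c.natAbs := by
    exact_mod_cast Nat.lt_two_pow_self (n := c.natAbs)
  rw [Int.abs_eq_natAbs] at h1
  omega
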